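/- arXiv:2201.01979 — 2 statements merged into one kernel-verified Lean document; each statement's English description precedes it below -/
import Mathlib

section
/- Let A be a commutative ring, f ∈ A, and M an A-module that is f-adically separated and complete (i.e. M ≅ lim_n M/f^n M) and has bounded f-power torsion. Then M is derived f-complete: Hom_A(A_f, M) = 0 and Ext^1_A(A_f, M) = 0. -/
open CategoryTheory

/-- Derived `f`-completeness of an `A`-module `M`:
`Hom_A(A_f, M) = 0` and `Ext¹_A(A_f, M) = 0`, where `A_f` is the localization at `f`. -/
def DerivedFComplete (A : Type) [CommRing A] (f : A) (M : Type) [AddCommGroup M]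
    [Module A M] : Prop :=
  (∀ φ : Localization.Away f →ₗ[A] M, φ = 0) ∧
    Subsingleton (((Ext A (ModuleCat.{0} A) 1).obj
      (Opposite.op (ModuleCat.of A (Localization.Away f)))).obj (ModuleCat.of A M))

noncomputable section DFCAux

namespace DFCAux

open CategoryTheory Limits

variable {A : Type} [CommRing A]

/-- The "telescope" map on `⊕ℕ A`, `eₙ ↦ f·eₙ₊₁ - eₙ`. -/
def G (f : A) : (ℕ →₀ A) →ₗ[A] (ℕ →₀ A) :=
  f • Finsupp.lmapDomain A A (· + 1) - LinearMap.id

variable (f : A)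

lemma G_single (n : ℕ) (a : A) :
    G f (Finsupp.single n a) = Finsupp.single (n + 1) (f * a) - Finsupp.single n a := by
  simp [G, Finsupp.mapDomain_single, Finsupp.smul_single, smul_eq_mul]

lemma G_apply_zero (x : ℕ →₀ A) : G f x 0 = - x 0 := by
  simp [G, Finsupp.mapDomain_notin_range (f := (· + 1)) x 0 (by simp)]

lemma G_apply_succ (x : ℕ →₀ A) (k : ℕ) : G f x (k + 1) = f * x k - x (k + 1) := by
  have : Finsupp.mapDomain (· + 1) x (k + 1) = x k :=
    Finsupp.mapDomain_apply (fun a b h => by omega) x k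
  simp [G, this, smul_eq_mul]

lemma G_injective : Function.Injective (G f) := by
  intro x y hxy
  have h0 : G f (x - y) = 0 := by rw [map_sub, hxy, sub_self]
  have : ∀ k, (x - y) k = 0 := by
    intro k
    induction k with
    | zero =>
        have h : -((x - y) 0) = 0 := by rw [← G_apply_zero f (x - y), h0]; rfl
        exact neg_eq_zero.mp h
    | succ k ih =>
        have h : f * ((x - y) k) - (x - y) (k + 1) = 0 := by
          rw [← G_apply_succ f (x - y) k, h0]; rfl
        rw [ih, mul_zero, zero_sub, neg_eq_zero] at h
        exact h
  have : x - y = 0 := Finsupp.ext fun k => this k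
  exact sub_eq_zero.mp this

/-- denominators -/
def fpow (n : ℕ) : Submonoid.powers f := ⟨f ^ n, ⟨n, rfl⟩⟩

/-- The map `⊕ℕ A → A_f`, `eₙ ↦ 1/fⁿ`. -/
def p (f : A) : (ℕ →₀ A) →ₗ[A] Localization.Away f :=
  Finsupp.lsum A fun n =>
    LinearMap.toSpanSingleton A (Localization.Away f)
      (IsLocalization.mk' (Localization.Away f) 1 (fpow f n))

lemma p_single (n : ℕ) (a : A) :
    p f (Finsupp.single n a) = IsLocalization.mk' (Localization.Away f) a (fpow f n) := by
  rw [p, Finsupp.lsum_single, LinearMap.toSpanSingleton_apply, Algebra.smul_def,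
    ← IsLocalization.mk'_eq_mul_mk'_one]

lemma p_G (x : ℕ →₀ A) : p f (G f x) = 0 := by
  have : (p f).comp (G f) = 0 := by
    apply Finsupp.lhom_ext
    intro n a
    simp only [LinearMap.comp_apply, LinearMap.zero_apply, G_single, map_sub, p_single]
    rw [sub_eq_zero, IsLocalization.mk'_eq_iff_eq]
    congr 1
    show (f ^ n : A) * (f * a) = f ^ (n + 1) * a
    ring
  exact DFunLike.congr_fun this x

lemma p_surjective : Function.Surjective (p f) := by
  intro z
  obtain ⟨⟨a, s⟩, h⟩ := IsLocalization.mk'_surjective (Submonoid.powers f) z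
  dsimp only at h
  obtain ⟨n, hn⟩ := s.2
  refine ⟨Finsupp.single n a, ?_⟩
  rw [p_single, ← h]
  congr 1
  exact Subtype.ext hn

lemma single_sub_mem (n j : ℕ) (a : A) :
    Finsupp.single n a - Finsupp.single (n + j) (f ^ j * a) ∈ LinearMap.range (G f) := by
  induction j with
  | zero => simpa using zero_mem _
  | succ j ih =>
      have h2 : Finsupp.single (n + j) (f ^ j * a)
          - Finsupp.single (n + (j + 1)) (f ^ (j + 1) * a) ∈ LinearMap.range (G f) := by
        refine ⟨-Finsupp.single (n + j) (f ^ j * a), ?_⟩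
        rw [map_neg, G_single, neg_sub]
        congr 2
        ring
      have := add_mem ih h2
      simpa using this
lemma ker_le_range (x : ℕ →₀ A) (hx : p f x = 0) : x ∈ LinearMap.range (G f) := by
  classical
  set K := x.support.sup id with hKdef
  have hK : ∀ n ∈ x.support, n ≤ K := fun n hn => Finset.le_sup (f := id) hn
  set c : A := ∑ n ∈ x.support, f ^ (K - n) * x n with hc
  have hxc : x - Finsupp.single K c ∈ LinearMap.range (G f) := by
    have hx' : (∑ n ∈ x.support, Finsupp.single n (x n)) = x := Finsupp.sum_single x
    have hsing : Finsupp.single K c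
        = ∑ n ∈ x.support, Finsupp.single K (f ^ (K - n) * x n) := by
      rw [hc]
      exact Finsupp.single_finset_sum _ _ _
    rw [← hx', hsing, ← Finset.sum_sub_distrib]
    refine Submodule.sum_mem _ fun n hn => ?_
    have hnK : n + (K - n) = K := Nat.add_sub_cancel' (hK n hn)
    have := single_sub_mem f n (K - n) (x n)
    rwa [hnK] at this
  have hpc : p f (Finsupp.single K c) = 0 := by
    obtain ⟨y, hy⟩ := hxc
    have h1 : p f (x - Finsupp.single K c) = 0 := by rw [← hy, p_G]
    rw [map_sub, hx, zero_sub, neg_eq_zero] at h1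
    exact h1
  rw [p_single, IsLocalization.mk'_eq_zero_iff] at hpc
  obtain ⟨m, hm⟩ := hpc
  obtain ⟨k, hk⟩ := m.2
  have hkc : f ^ k * c = 0 := by rw [show f ^ k = (m : A) from hk]; exact hm
  have h3 : Finsupp.single K c ∈ LinearMap.range (G f) := by
    have := single_sub_mem f K k c
    rwa [hkc, Finsupp.single_zero, sub_zero] at this
  have := add_mem hxc h3
  simpa using this

section Complete

variable {M : Type} [AddCommGroup M] [Module A M]

lemma pow_smul_mem (j k : ℕ) (hjk : j ≤ k) (y : M) :
    f ^ k • y ∈ ((Ideal.span {f}) ^ j • ⊤ : Submodule A M) := by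
  have hfk : f ^ k ∈ (Ideal.span {f}) ^ j := by
    have h1 : f ^ j ∈ (Ideal.span {f}) ^ j :=
      Ideal.pow_mem_pow (Ideal.mem_span_singleton_self f) j
    have h2 : f ^ k = f ^ (k - j) * f ^ j := by rw [← pow_add]; congr 1; omega
    rw [h2]
    exact Ideal.mul_mem_left _ _ h1
  simpa using Submodule.smul_mem_smul hfk Submodule.mem_top

lemma G_dual_surjective (hc : IsAdicComplete (Ideal.span {f}) M)
    (φ : (ℕ →₀ A) →ₗ[A] M) : ∃ ψ : (ℕ →₀ A) →ₗ[A] M, ψ.comp (G f) = φ := by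
  set I := Ideal.span {f} with hI
  set y : ℕ → M := fun n => φ (Finsupp.single n 1) with hy
  set F : ℕ → ℕ → M := fun n j => -(∑ k ∈ Finset.range j, f ^ k • y (n + k)) with hF
  have hcau : ∀ n : ℕ, ∀ {a b : ℕ}, a ≤ b →
      F n a ≡ F n b [SMOD (I ^ a • ⊤ : Submodule A M)] := by
    intro n a b hab
    rw [SModEq.sub_mem]
    have hsum : F n a - F n b = ∑ k ∈ Finset.Ico a b, f ^ k • y (n + k) := by
      rw [hF]
      simp only
      rw [← Finset.sum_range_add_sum_Ico _ hab]
      abel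
    rw [hsum]
    exact Submodule.sum_mem _ fun k hk => pow_smul_mem f a k (Finset.mem_Ico.mp hk).1 _
  choose m hm using fun n => IsPrecomplete.prec hc.toIsPrecomplete (hcau n)
  have key : ∀ n, f • m (n + 1) - m n = y n := by
    intro n
    have hz : ∀ j : ℕ, (f • m (n + 1) - m n - y n) ∈ (I ^ j • ⊤ : Submodule A M) := by
      intro j
      have h1 : m n - F n j ∈ (I ^ j • ⊤ : Submodule A M) := by
        have := (SModEq.sub_mem).mp (hm n j)
        simpa using neg_mem this
      have h2 : f • (m (n + 1) - F (n + 1) j) ∈ (I ^ j • ⊤ : Submodule A M) := by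
        refine Submodule.smul_mem _ _ ?_
        have := (SModEq.sub_mem).mp (hm (n + 1) j)
        simpa using neg_mem this
      have h3 : f • F (n + 1) j - F n j - y n = -(f ^ j • y (n + j)) := by
        have e1 : ∑ x ∈ Finset.range (j + 1), f ^ x • y (n + x)
            = (∑ x ∈ Finset.range j, f ^ x • y (n + x)) + f ^ j • y (n + j) :=
          Finset.sum_range_succ _ _
        have e2 : ∑ x ∈ Finset.range (j + 1), f ^ x • y (n + x)
            = (∑ x ∈ Finset.range j, f ^ (x + 1) • y (n + (x + 1))) + f ^ 0 • y (n + 0) :=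
          Finset.sum_range_succ' _ _
        have e3 : f • F (n + 1) j = -∑ x ∈ Finset.range j, f ^ (x + 1) • y (n + (x + 1)) := by
          simp only [hF]
          simp only [smul_neg, Finset.smul_sum, smul_smul, ← pow_succ']
          congr 1
          exact Finset.sum_congr rfl fun k _ => by congr 2; omega
        rw [e3]
        simp only [hF]
        simp only [pow_zero, one_smul, add_zero] at e2
        have e4 : (∑ x ∈ Finset.range j, f ^ (x + 1) • y (n + (x + 1)))
            = (∑ x ∈ Finset.range j, f ^ x • y (n + x)) + f ^ j • y (n + j) - y n := by
          rw [← e1, e2]; abel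
        rw [e4]
        abel
      have : f • m (n + 1) - m n - y n
          = f • (m (n + 1) - F (n + 1) j) - (m n - F n j) + (f • F (n + 1) j - F n j - y n) := by
        rw [smul_sub]; abel
      rw [this, h3]
      exact add_mem (sub_mem h2 h1) (neg_mem (pow_smul_mem f j j le_rfl _))
    have := hc.toIsHausdorff.haus (f • m (n + 1) - m n - y n)
      (fun j => (SModEq.zero).mpr (hz j))
    exact sub_eq_zero.mp this
  refine ⟨Finsupp.linearCombination A m, ?_⟩
  apply Finsupp.lhom_ext
  intro n a
  have hsingle : Finsupp.single n a = a • Finsupp.single n (1 : A) := by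
    rw [Finsupp.smul_single, smul_eq_mul, mul_one]
  rw [LinearMap.comp_apply, hsingle, map_smul, map_smul, G_single, map_sub,
    Finsupp.linearCombination_single, Finsupp.linearCombination_single, mul_one, one_smul,
    key n]
  simp only [hy]
  rw [map_smul]

end Complete

section Resolution

variable (A : Type) [CommRing A]

/-- The degreewise objects of the resolution. -/
def Xs : ℕ → ModuleCat.{0} A
  | 0 => ModuleCat.of A (ℕ →₀ A)
  | 1 => ModuleCat.of A (ℕ →₀ A)
  | _ => ModuleCat.of A PUnit

instance Xs_projective (n : ℕ) : Projective (Xs A n) := by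
  rcases n with _ | _ | n
  · exact (IsProjective.iff_projective _).mp inferInstance
  · exact (IsProjective.iff_projective _).mp inferInstance
  · exact (IsProjective.iff_projective _).mp inferInstance

variable (f : A)

/-- The two-term complex `… → 0 → ⊕ℕ A → ⊕ℕ A`. -/
def Kcx : ChainComplex (ModuleCat.{0} A) ℕ :=
  ChainComplex.of (Xs A)
    (fun n => match n with
      | 0 => (ModuleCat.ofHom (G f) : Xs A 1 ⟶ Xs A 0)
      | _ + 1 => 0)
    (fun n => match n with
      | 0 => zero_comp
      | _ + 1 => zero_comp)

lemma Kcx_d10 : (Kcx A f).d 1 0 = (ModuleCat.ofHom (G f) : Xs A 1 ⟶ Xs A 0) :=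
  by unfold Kcx; exact ChainComplex.of_d (Xs A) (fun n => match n with | 0 => (ModuleCat.ofHom (G f) : Xs A 1 ⟶ Xs A 0) | _ + 1 => 0) 0

lemma Kcx_d21 : (Kcx A f).d 2 1 = 0 :=
  by unfold Kcx; exact ChainComplex.of_d (Xs A) (fun n => match n with | 0 => (ModuleCat.ofHom (G f) : Xs A 1 ⟶ Xs A 0) | _ + 1 => 0) 1

/-- The projective resolution `0 → ⊕ℕ A → ⊕ℕ A → A_f → 0`. -/
def resolution : ProjectiveResolution (ModuleCat.of A (Localization.Away f)) where
  complex := Kcx A f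
  projective n := Xs_projective A n
  π := (ChainComplex.toSingle₀Equiv _ _).symm
    ⟨(ModuleCat.ofHom (p f) : Xs A 0 ⟶ ModuleCat.of A (Localization.Away f)), by
      rw [Kcx_d10]
      apply ModuleCat.hom_ext
      apply Finsupp.lhom_ext
      intro n a
      simp only [ModuleCat.hom_comp, ModuleCat.hom_ofHom, ModuleCat.hom_zero,
        LinearMap.comp_apply, LinearMap.zero_apply]
      exact p_G f (Finsupp.single n a)⟩
  quasiIso := ⟨fun n => by
    cases n with
    | zero =>
      rw [ChainComplex.quasiIsoAt₀_iff, ShortComplex.quasiIso_iff_of_zeros']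
      rotate_left
      · rfl
      · rfl
      · rfl
      constructor
      · rw [ShortComplex.moduleCat_exact_iff]
        intro x hx
        have hx' : p f x = 0 := hx
        obtain ⟨y, hy⟩ := ker_le_range f x hx'
        refine ⟨y, ?_⟩
        show (Kcx A f).d 1 0 y = x
        rw [Kcx_d10]
        exact hy
      · rw [ModuleCat.epi_iff_surjective]
        exact p_surjective f
    | succ n =>
      rw [quasiIsoAt_iff_exactAt']
      swap
      · apply ChainComplex.exactAt_succ_single_obj
      rcases n with _ | n
      · rw [(Kcx A f).exactAt_iff' 2 1 0 (by simp) (by simp)]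
        rw [ShortComplex.moduleCat_exact_iff]
        intro x hx
        have hx0 : x = 0 := by
          apply G_injective f
          refine Eq.trans ?_ (map_zero (G f)).symm
          have : (Kcx A f).d 1 0 x = 0 := hx
          rwa [Kcx_d10] at this
        exact ⟨0, by rw [map_zero, hx0]⟩
      · rw [(Kcx A f).exactAt_iff' (n + 3) (n + 2) (n + 1) (by simp) (by simp)]
        exact ShortComplex.exact_of_isZero_X₂ _
          (ModuleCat.isZero_of_subsingleton (ModuleCat.of A PUnit))⟩

end Resolution

end DFCAux

end DFCAux

open CategoryTheory

lemma ModuleCatSubsingletonOfIsZero {R : Type} [Ring R] {X : ModuleCat.{0} R}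
    (h : Limits.IsZero X) : Subsingleton X := by
  refine ⟨fun a b => ?_⟩
  have hid : (𝟙 X : X ⟶ X) = 0 := h.eq_of_src _ _
  have h0 : ∀ z : X, z = (0 : X ⟶ X) z := fun z => by rw [← hid]; rfl
  have hz : ∀ z : X, (0 : X ⟶ X) z = (0 : X →ₗ[R] X) z := fun z => rfl
  calc a = (0 : X ⟶ X) a := h0 a
  _ = (0 : X ⟶ X) b := by rw [hz a, hz b, LinearMap.zero_apply, LinearMap.zero_apply]
  _ = b := (h0 b).symm

/-- If `M` is `f`-adically separated and complete
(`M ≅ lim_n M/fⁿM`) and has bounded `f`-power torsion, then `M` is derived `f`-complete. -/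
theorem isAdicComplete_boundedTorsion_derivedComplete
    (A : Type) [CommRing A] (f : A) (M : Type) [AddCommGroup M] [Module A M]
    (hcomplete : IsAdicComplete (Ideal.span {f}) M)
    (hbdd : ∃ N : ℕ, ∀ x : M, (∃ n : ℕ, f ^ n • x = 0) → f ^ N • x = 0) :
    DerivedFComplete A f M := by
  constructor
  · -- Hom part
    intro φ
    ext x
    show φ x = 0
    refine hcomplete.toIsHausdorff.haus (φ x) fun n => (SModEq.zero).mpr ?_
    have hx : f ^ n • (IsLocalization.mk' (Localization.Away f) 1 (DFCAux.fpow f n) * x)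
        = x := by
      have h1 : IsLocalization.mk' (Localization.Away f) (f ^ n) (DFCAux.fpow f n) = 1 :=
        IsLocalization.mk'_self' (S := Localization.Away f) (x := DFCAux.fpow f n)
      rw [Algebra.smul_def, ← mul_assoc, ← IsLocalization.mk'_eq_mul_mk'_one, h1, one_mul]
    have : φ x = f ^ n • φ (IsLocalization.mk' (Localization.Away f) 1 (DFCAux.fpow f n) * x) := by
      rw [← map_smul, hx]
    rw [this]
    exact DFCAux.pow_smul_mem f n n le_rfl _
  · -- Ext part
    have hexact : (((DFCAux.Kcx A f).linearYonedaObj A (ModuleCat.of A M)).ExactAt 1) := by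
      rw [HomologicalComplex.exactAt_iff' _ 0 1 2 (by simp) (by simp),
        ShortComplex.moduleCat_exact_iff]
      intro x _
      obtain ⟨ψ, hψ⟩ := DFCAux.G_dual_surjective f hcomplete
        (x : DFCAux.Xs A 0 ⟶ ModuleCat.of A M).hom
      refine ⟨ModuleCat.ofHom ψ, ?_⟩
      apply ModuleCat.hom_ext
      change (ModuleCat.ofHom ψ).hom.comp ((DFCAux.Kcx A f).d 1 0).hom = _
      rw [DFCAux.Kcx_d10]
      exact hψ
    rw [HomologicalComplex.exactAt_iff_isZero_homology] at hexact
    have hzero : Limits.IsZero (((Ext A (ModuleCat.{0} A) 1).obj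
        (Opposite.op (ModuleCat.of A (Localization.Away f)))).obj (ModuleCat.of A M)) :=
      Limits.IsZero.of_iso hexact ((DFCAux.resolution A f).isoExt 1 (ModuleCat.of A M))
    exact ModuleCatSubsingletonOfIsZero hzero
end

section
/- Consider the ring A = Z_p[[X]] and the ring endomorphism φ : A → A determined by φ(X) = (1+X)^p − 1 (and φ acting as the identity on Z_p). Then A is a free module of rank p over the subring φ(A), with basis the elements (1+X)^i for 0 ≤ i ≤ p−1. -/
open PowerSeries

section PsfAux
open Finset

variable {p : ℕ} [hp : Fact p.Prime]

local notation "A" => PowerSeries ℤ_[p]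

lemma psf_coeff_one_add_X_pow (i j : ℕ) :
    coeff j ((1 + X : A) ^ i) = (i.choose j : ℤ_[p]) := by
  rw [add_comm (1:A) X, add_pow]
  simp only [one_pow, mul_one, map_sum]
  rw [Finset.sum_congr rfl (fun k _ => ?_), Finset.sum_ite_eq' (range (i+1)) j]
  · simp only [mem_range]
    split_ifs with h
    · rfl
    · rw [Nat.choose_eq_zero_of_lt (by omega), Nat.cast_zero]
  · show coeff j (X ^ k * (i.choose k : A)) = if k = j then (i.choose k : ℤ_[p]) else 0
    rw [mul_comm, ← map_natCast (C (R := ℤ_[p])), coeff_C_mul, coeff_X_pow]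
    split_ifs with h1 h2 h3
    · rw [mul_one]
    · exact absurd h1.symm h2
    · exact absurd h3.symm h1
    · rw [mul_zero]

lemma psf_X_dvd_g : (X : A) ∣ ((1+X:A)^p - 1) := by
  rw [X_dvd_iff, map_sub, map_pow, map_add, map_one, constantCoeff_X, add_zero, one_pow, sub_self]

lemma psf_coeff_g_pow {n k : ℕ} (h : k < n) : coeff k (((1+X:A)^p - 1) ^ n) = 0 := by
  have : (X:A)^n ∣ ((1+X:A)^p - 1)^n := pow_dvd_pow_of_dvd psf_X_dvd_g n
  exact X_pow_dvd_iff.mp this k h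

lemma psf_coeff_zero_of_X_pow_dvd {f : A} {n k : ℕ} (h : (X:A)^n ∣ f) (hk : k < n) :
    coeff k f = 0 := X_pow_dvd_iff.mp h k hk

lemma psf_C_pow_dvd_iff {m : ℕ} {f : A} :
    (C ((p:ℤ_[p])^m)) ∣ f ↔ ∀ k, (p:ℤ_[p])^m ∣ coeff k f := by
  constructor
  · rintro ⟨e, rfl⟩ k
    rw [coeff_C_mul]
    exact Dvd.intro _ rfl
  · intro h
    refine ⟨PowerSeries.mk (fun k => (h k).choose), ?_⟩
    ext k
    rw [coeff_C_mul, coeff_mk]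
    exact (h k).choose_spec

lemma psf_phi_coeff (φ : A →+* A) (hC : ∀ c : ℤ_[p], φ (C c) = C c)
    (hX : φ X = (1+X)^p - 1) (h w : A) (k : ℕ) :
    coeff k (φ h * w)
      = ∑ n ∈ range (k+1), coeff n h * coeff k (((1+X:A)^p - 1)^n * w) := by
  set g : A := (1+X:A)^p - 1 with hg
  set T : A := ∑ n ∈ range (k+1), C (coeff n h) * X^n with hTdef
  have hcoeffT : ∀ m, m < k+1 → coeff m T = coeff m h := by
    intro m hm
    rw [hTdef, map_sum]
    rw [Finset.sum_congr rfl (fun n _ => by rw [coeff_C_mul, coeff_X_pow, mul_ite, mul_one, mul_zero]),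
      Finset.sum_ite_eq (range (k+1)) m, if_pos (mem_range.mpr hm)]
  have hT : (X:A)^(k+1) ∣ (h - T) := X_pow_dvd_iff.mpr (fun m hm => by
    rw [map_sub, hcoeffT m hm, sub_self])
  obtain ⟨h', hh'⟩ := hT
  have hsplit : h = T + X^(k+1) * h' := by rw [← hh']; ring
  have hφT : φ T = ∑ n ∈ range (k+1), C (coeff n h) * g^n := by
    rw [hTdef, map_sum]
    exact Finset.sum_congr rfl (fun n _ => by rw [map_mul, hC, map_pow, hX, hg])
  have hφh : φ h = φ T + g^(k+1) * φ h' := by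
    rw [hsplit, map_add, map_mul, map_pow, hX, hg]
  rw [hφh, add_mul, map_add, hφT, Finset.sum_mul, map_sum]
  have h2 : coeff k (g^(k+1) * φ h' * w) = 0 := by
    refine psf_coeff_zero_of_X_pow_dvd ?_ (Nat.lt_succ_self k)
    exact Dvd.dvd.mul_right (Dvd.dvd.mul_right (pow_dvd_pow_of_dvd psf_X_dvd_g (k+1)) _) _
  rw [h2, add_zero]
  exact Finset.sum_congr rfl (fun n _ => by rw [mul_assoc, coeff_C_mul])

lemma psf_p_dvd_g_sub : (C ((p:ℤ_[p])^1)) ∣ ((1+X:A)^p - 1 - X^p) := by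
  rw [psf_C_pow_dvd_iff]
  intro k
  rw [pow_one, map_sub, map_sub, psf_coeff_one_add_X_pow, coeff_one, coeff_X_pow]
  rcases eq_or_ne k 0 with rfl | h0
  · rw [if_pos rfl, if_neg (fun h => hp.out.ne_zero h.symm), Nat.choose_zero_right]
    simp
  rcases eq_or_ne k p with rfl | hkp
  · simp [Nat.choose_self, h0]
  rcases lt_or_gt_of_ne hkp with h | h
  · have := hp.out.dvd_choose_self h0 h
    rw [if_neg h0, if_neg hkp, sub_zero, sub_zero]
    exact_mod_cast (Nat.cast_dvd_cast this : (p:ℤ_[p]) ∣ _)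
  · rw [Nat.choose_eq_zero_of_lt h, if_neg h0, if_neg hkp]
    simp

lemma psf_p_dvd_g_pow_sub (n : ℕ) :
    (C ((p:ℤ_[p])^1)) ∣ (((1+X:A)^p - 1)^n - X^(p*n)) := by
  refine dvd_trans psf_p_dvd_g_sub ?_
  have := sub_dvd_pow_sub_pow ((1+X:A)^p - 1) (X^p) n
  rwa [← pow_mul] at this

lemma psf_coeff_g_pow_mul_congr (n k : ℕ) (w : A) :
    (p:ℤ_[p]) ∣ coeff k (((1+X:A)^p - 1)^n * w) - coeff k ((X:A)^(p*n) * w) := by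
  have h1 : (C ((p:ℤ_[p])^1)) ∣ ((((1+X:A)^p - 1)^n - X^(p*n)) * w) :=
    Dvd.dvd.mul_right (psf_p_dvd_g_pow_sub n) w
  have h2 := (psf_C_pow_dvd_iff.mp h1) k
  rwa [pow_one, sub_mul, map_sub] at h2

lemma psf_row (φ : A →+* A) (hC : ∀ c : ℤ_[p], φ (C c) = C c)
    (hX : φ X = (1+X)^p - 1) (a : Fin p → A)
    (hrel : ∑ i : Fin p, φ (a i) * (1+X:A)^(i:ℕ) = 0) (q r : ℕ) (hr : r < p) :
    (p:ℤ_[p]) ∣ ∑ i : Fin p, ((i:ℕ).choose r : ℤ_[p]) * coeff q (a i) := by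
  have hp1 : 1 ≤ p := hp.out.one_lt.le
  set k := p * q + r with hk
  have hS : ∑ i : Fin p, ∑ n ∈ range (k+1),
      coeff n (a i) * coeff k (((1+X:A)^p - 1)^n * (1+X:A)^(i:ℕ)) = 0 := by
    rw [← Finset.sum_congr rfl (fun i _ => psf_phi_coeff φ hC hX (a i) ((1+X:A)^(i:ℕ)) k),
      ← map_sum, hrel, map_zero]
  set S' : ℤ_[p] := ∑ i : Fin p, ∑ n ∈ range (k+1),
      coeff n (a i) * coeff k ((X:A)^(p*n) * (1+X:A)^(i:ℕ)) with hS'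
  have hdvdS' : (p:ℤ_[p]) ∣ S' := by
    have : (p:ℤ_[p]) ∣ (0 - S') := by
      rw [← hS, hS', ← Finset.sum_sub_distrib]
      refine Finset.dvd_sum (fun i _ => ?_)
      rw [← Finset.sum_sub_distrib]
      refine Finset.dvd_sum (fun n _ => ?_)
      rw [← mul_sub]
      exact Dvd.dvd.mul_left (psf_coeff_g_pow_mul_congr n k _) _
    rwa [zero_sub, dvd_neg] at this
  have hXc : ∀ n : ℕ, ∀ i : Fin p, coeff k ((X:A)^(p*n) * (1+X:A)^(i:ℕ))
      = if p*n ≤ k then (((i:ℕ).choose (k - p*n) : ℤ_[p])) else 0 := by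
    intro n i
    split_ifs with h
    · have h2 : coeff (k - p*n + p*n) ((X:A)^(p*n) * (1+X:A)^(i:ℕ))
          = (((i:ℕ).choose (k - p*n) : ℤ_[p])) := by
        rw [coeff_X_pow_mul, psf_coeff_one_add_X_pow]
      rwa [Nat.sub_add_cancel h] at h2
    · exact psf_coeff_zero_of_X_pow_dvd (Dvd.intro _ rfl) (by omega)
  have hS'eq : S' = ∑ i : Fin p, ((i:ℕ).choose r : ℤ_[p]) * coeff q (a i) := by
    rw [hS']
    refine Finset.sum_congr rfl (fun i _ => ?_)
    rw [Finset.sum_eq_single q]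
    · rw [hXc, if_pos (by omega), hk]
      rw [show p * q + r - p * q = r by omega, mul_comm]
    · intro n _ hn
      rw [hXc]
      split_ifs with h
      · have hi : (i:ℕ) < p := i.isLt
        have hnle : n ≤ q := by
          by_contra hgt
          push_neg at hgt
          have h3 : p * (q+1) ≤ p * n := Nat.mul_le_mul_left p hgt
          have h4 : p * (q+1) = p*q + p := by ring
          omega
        have hnlt : n < q := lt_of_le_of_ne hnle hn
        have h3 : p * (n+1) ≤ p * q := Nat.mul_le_mul_left p (by omega)
        have h4 : p * (n+1) = p*n + p := by ring
        rw [Nat.choose_eq_zero_of_lt (by omega), Nat.cast_zero, mul_zero]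
      · rw [mul_zero]
    · intro hq
      have h5 : 1*q ≤ p*q := Nat.mul_le_mul_right q hp1
      exact absurd (mem_range.mpr (by omega)) hq
  rwa [hS'eq] at hdvdS'

lemma psf_p_dvd_all (φ : A →+* A) (hC : ∀ c : ℤ_[p], φ (C c) = C c)
    (hX : φ X = (1+X)^p - 1) (a : Fin p → A)
    (hrel : ∑ i : Fin p, φ (a i) * (1+X:A)^(i:ℕ) = 0) (i : Fin p) (q : ℕ) :
    (p:ℤ_[p]) ∣ coeff q (a i) := by
  have main : ∀ m : ℕ, ∀ i : Fin p, p - 1 - (i:ℕ) ≤ m → (p:ℤ_[p]) ∣ coeff q (a i) := by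
    intro m
    induction m using Nat.strong_induction_on with
    | _ m ih =>
      intro i him
      have hrow := psf_row φ hC hX a hrel q (i:ℕ) i.isLt
      have herase : (p:ℤ_[p]) ∣ ∑ j ∈ Finset.univ.erase i,
          ((j:ℕ).choose (i:ℕ) : ℤ_[p]) * coeff q (a j) := by
        refine Finset.dvd_sum fun j hj => ?_
        rcases lt_trichotomy ((j:ℕ)) ((i:ℕ)) with h | h | h
        · rw [Nat.choose_eq_zero_of_lt h, Nat.cast_zero, zero_mul]
          exact dvd_zero _
        · exact absurd (Fin.ext h) (Finset.ne_of_mem_erase hj)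
        · have hj2 := j.isLt
          have hi2 := i.isLt
          exact Dvd.dvd.mul_left (ih (p - 1 - (j:ℕ)) (by omega) j le_rfl) _
      have hdvd : (p:ℤ_[p]) ∣ ((i:ℕ).choose (i:ℕ) : ℤ_[p]) * coeff q (a i) := by
        have h6 := Finset.add_sum_erase Finset.univ
          (fun j : Fin p => ((j:ℕ).choose (i:ℕ) : ℤ_[p]) * coeff q (a j))
          (Finset.mem_univ i)
        have h7 := dvd_sub hrow herase
        rw [← h6] at h7
        simpa using h7
      rwa [Nat.choose_self, Nat.cast_one, one_mul] at hdvd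
  exact main (p - 1 - (i:ℕ)) i le_rfl

lemma psf_padic_zero (x : ℤ_[p]) (h : ∀ m : ℕ, (p:ℤ_[p])^m ∣ x) : x = 0 := by
  have hn : ∀ m : ℕ, ‖x‖ ≤ ((p:ℝ)⁻¹)^m := fun m => by
    have := (PadicInt.norm_le_pow_iff_mem_span_pow x m).mpr
      (Ideal.mem_span_singleton.mpr (h m))
    rwa [zpow_neg, zpow_natCast, ← inv_pow] at this
  have h2 : Filter.Tendsto (fun m : ℕ => ((p:ℝ)⁻¹)^m) Filter.atTop (nhds 0) := by
    apply tendsto_pow_atTop_nhds_zero_of_lt_one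
    · positivity
    · rw [inv_lt_one_iff₀]; right; exact_mod_cast hp.out.one_lt
  have h3 := ge_of_tendsto h2 (Filter.Eventually.of_forall hn)
  exact norm_eq_zero.mp (le_antisymm h3 (norm_nonneg x))

lemma psf_inj (φ : A →+* A) (hC : ∀ c : ℤ_[p], φ (C c) = C c)
    (hX : φ X = (1+X)^p - 1) (a : Fin p → A)
    (hrel : ∑ i : Fin p, φ (a i) * (1+X:A)^(i:ℕ) = 0) (i : Fin p) : a i = 0 := by
  have hpn : ((p:ℤ_[p])) ≠ 0 := Nat.cast_ne_zero.mpr hp.out.ne_zero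
  have step : ∀ m : ℕ, ∀ (j : Fin p) (q : ℕ), (p:ℤ_[p])^m ∣ coeff q (a j) := by
    intro m
    induction m with
    | zero => intro j q; rw [pow_zero]; exact one_dvd _
    | succ m ihm =>
      intro j q
      choose b hb using fun j' : Fin p =>
        (psf_C_pow_dvd_iff.mpr (fun k => ihm j' k) : C ((p:ℤ_[p])^m) ∣ a j')
      have hrel2 : C ((p:ℤ_[p])^m) * ∑ j' : Fin p, φ (b j') * (1+X:A)^(j':ℕ) = 0 := by
        rw [Finset.mul_sum, ← hrel]
        refine Finset.sum_congr rfl (fun j' _ => ?_)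
        rw [hb j', map_mul, hC, mul_assoc]
      have hCne : C ((p:ℤ_[p])^m) ≠ 0 := by
        intro h
        have := congrArg (constantCoeff (R := ℤ_[p])) h
        rw [constantCoeff_C, map_zero] at this
        exact pow_ne_zero m hpn this
      have hrel3 : ∑ j' : Fin p, φ (b j') * (1+X:A)^(j':ℕ) = 0 :=
        (mul_eq_zero.mp hrel2).resolve_left hCne
      have hpb := psf_p_dvd_all φ hC hX b hrel3 j q
      rw [hb j, coeff_C_mul, pow_succ]
      exact mul_dvd_mul (dvd_refl _) hpb
  ext q
  rw [map_zero]
  exact psf_padic_zero _ (fun m => step m i q)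



/-- extract arithmetic progression j mod p -/
noncomputable def psfSigma (j : ℕ) (f : A) : A := PowerSeries.mk fun n => coeff (p*n + j) f

noncomputable def psfExpand (t : A) : A :=
  PowerSeries.mk fun k => if p ∣ k then coeff (k/p) t else 0

lemma psf_expand_C_mul (c : ℤ_[p]) (s : A) :
    psfExpand (C c * s) = C c * (psfExpand s : A) := by
  ext k
  simp only [psfExpand, coeff_mk, coeff_C_mul]
  split_ifs with h
  · rfl
  · rw [mul_zero]

lemma psf_expand_add (s s' : A) : psfExpand (s + s') = psfExpand s + psfExpand s' := by
  ext k
  simp only [psfExpand, coeff_mk, map_add, coeff_mk]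
  split_ifs with h
  · rfl
  · rw [add_zero]

lemma psf_digit_decomp (f : A) :
    f = ∑ j ∈ range p, psfExpand (psfSigma j f) * (X:A)^j := by
  have hp1 : 0 < p := hp.out.pos
  ext k
  rw [map_sum, Finset.sum_eq_single (k % p)]
  · have hdm := Nat.div_add_mod k p
    rw [coeff_mul_X_pow', if_pos (Nat.mod_le k p)]
    have hsub : k - k % p = p * (k / p) := by omega
    rw [hsub]
    simp only [psfExpand, psfSigma, coeff_mk]
    rw [if_pos (Dvd.intro _ rfl), Nat.mul_div_cancel_left _ hp1, hdm]
  · intro j hj hne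
    rw [coeff_mul_X_pow']
    split_ifs with hle
    · simp only [psfExpand, coeff_mk]
      rw [if_neg]
      intro hdvd
      obtain ⟨c, hc⟩ := hdvd
      have hk : k = p * c + j := by omega
      have : k % p = j := by
        rw [hk, Nat.mul_add_mod, Nat.mod_eq_of_lt (mem_range.mp hj)]
      exact hne this.symm
    · rfl
  · intro hk
    exact absurd (mem_range.mpr (Nat.mod_lt k hp1)) hk

noncomputable def psfE (j i : ℕ) : ℤ_[p] := (-1:ℤ_[p])^(j-i) * (j.choose i : ℤ_[p])

lemma psf_X_pow_eq (j : ℕ) (hj : j < p) :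
    (X:A)^j = ∑ i : Fin p, C (psfE (p := p) j (i:ℕ)) * (1+X:A)^(i:ℕ) := by
  have h0 : (1+X+(-1) : A) = X := by ring
  have h1 := add_pow (1+X:A) (-1:A) j
  rw [h0] at h1
  rw [h1, Fin.sum_univ_eq_sum_range (fun i => C (psfE (p := p) j i) * (1+X:A)^i) p]
  have h2 : ∀ i : ℕ, (1+X:A)^i * (-1:A)^(j-i) * (j.choose i : A)
      = C (psfE (p := p) j i) * (1+X:A)^i := by
    intro i
    simp only [psfE, map_mul, map_pow, map_neg, map_one, map_natCast]
    ring
  rw [Finset.sum_congr rfl (fun i _ => h2 i)]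
  refine Finset.sum_subset (Finset.range_subset_range.mpr hj) (fun x _ hx => ?_)
  have hx2 : j < x := by
    simp only [mem_range] at hx
    omega
  simp only [psfE, Nat.choose_eq_zero_of_lt hx2, Nat.cast_zero, mul_zero, map_zero, zero_mul]

lemma psf_dvd_coeff_mul {c : ℤ_[p]} {d w : A} (h : ∀ k, c ∣ coeff k d) (k : ℕ) :
    c ∣ coeff k (d * w) := by
  rw [coeff_mul]
  exact Finset.dvd_sum fun q _ => (h q.1).mul_right _

lemma psf_expand_sum {ι : Type*} (s : Finset ι) (F : ι → A) :
    psfExpand (∑ j ∈ s, F j) = ∑ j ∈ s, psfExpand (F j) := by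
  classical
  induction s using Finset.induction_on with
  | empty =>
    ext k
    simp [psfExpand]
  | insert _ _ h ihs =>
    rw [Finset.sum_insert h, psf_expand_add, ihs, Finset.sum_insert h]

lemma psf_phi_coeff_one (φ : A →+* A) (hC : ∀ c : ℤ_[p], φ (C c) = C c)
    (hX : φ X = (1+X)^p - 1) (t : A) (k : ℕ) :
    coeff k (φ t) = ∑ n ∈ range (k+1), coeff n t * coeff k (((1+X:A)^p - 1)^n) := by
  have h := psf_phi_coeff φ hC hX t 1 k
  simpa only [mul_one] using h

lemma psf_phi_expand_congr (φ : A →+* A) (hC : ∀ c : ℤ_[p], φ (C c) = C c)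
    (hX : φ X = (1+X)^p - 1) (t : A) (k : ℕ) :
    (p:ℤ_[p]) ∣ coeff k (φ t) - coeff k (psfExpand t) := by
  have hp1 : 0 < p := hp.out.pos
  rw [psf_phi_coeff_one φ hC hX]
  have key : coeff k (psfExpand t)
      = ∑ n ∈ range (k+1), coeff n t * coeff k ((X:A)^(p*n)) := by
    simp only [psfExpand, coeff_mk, coeff_X_pow]
    by_cases hpk : p ∣ k
    · obtain ⟨c, rfl⟩ := hpk
      rw [if_pos (Dvd.intro _ rfl), Nat.mul_div_cancel_left _ hp1, Finset.sum_eq_single c]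
      · rw [if_pos rfl, mul_one]
      · intro n _ hn
        rw [if_neg (fun h => hn (Nat.eq_of_mul_eq_mul_left hp1 h).symm), mul_zero]
      · intro hc
        have : 1 * c ≤ p * c := Nat.mul_le_mul_right c hp1
        exact absurd (mem_range.mpr (by omega)) hc
    · rw [if_neg hpk]
      symm
      refine Finset.sum_eq_zero fun n _ => ?_
      rw [if_neg (fun h => hpk ⟨n, h⟩), mul_zero]
  rw [key, ← Finset.sum_sub_distrib]
  refine Finset.dvd_sum fun n _ => ?_
  rw [← mul_sub]
  have h2 := psf_coeff_g_pow_mul_congr (p := p) n k 1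
  rw [mul_one, mul_one] at h2
  exact h2.mul_left _

lemma psf_step (φ : A →+* A) (hC : ∀ c : ℤ_[p], φ (C c) = C c)
    (hX : φ X = (1+X)^p - 1) (f : A) : ∃ (t : Fin p → A) (f' : A),
    f = (∑ i : Fin p, φ (t i) * (1+X:A)^(i:ℕ)) + C (p:ℤ_[p]) * f' := by
  set t : Fin p → A := fun i => ∑ j ∈ range p, C (psfE (p := p) j (i:ℕ)) * psfSigma j f
    with ht
  have hexp : ∑ i : Fin p, psfExpand (t i) * (1+X:A)^(i:ℕ) = f := by
    have h1 : ∀ i : Fin p, psfExpand (t i)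
        = ∑ j ∈ range p, C (psfE (p := p) j (i:ℕ)) * psfExpand (psfSigma j f) := by
      intro i
      rw [ht]
      simp only
      rw [psf_expand_sum]
      exact Finset.sum_congr rfl fun j _ => psf_expand_C_mul _ _
    rw [Finset.sum_congr rfl (fun i _ => by rw [h1 i, Finset.sum_mul]), Finset.sum_comm]
    have h2 : ∀ j ∈ range p, ∑ i : Fin p,
        C (psfE (p := p) j (i:ℕ)) * psfExpand (psfSigma j f) * (1+X:A)^(i:ℕ)
        = psfExpand (psfSigma j f) * (X:A)^j := by
      intro j hj
      rw [psf_X_pow_eq j (mem_range.mp hj), Finset.mul_sum]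
      exact Finset.sum_congr rfl fun i _ => by ring
    rw [Finset.sum_congr rfl h2, ← psf_digit_decomp f]
  have hres : ∀ k, (p:ℤ_[p]) ∣ coeff k (f - ∑ i : Fin p, φ (t i) * (1+X:A)^(i:ℕ)) := by
    intro k
    have hdiff : f - ∑ i : Fin p, φ (t i) * (1+X:A)^(i:ℕ)
        = ∑ i : Fin p, (psfExpand (t i) - φ (t i)) * (1+X:A)^(i:ℕ) := by
      rw [← hexp, ← Finset.sum_sub_distrib]
      exact Finset.sum_congr rfl fun i _ => by ring
    rw [hdiff, map_sum]
    refine Finset.dvd_sum fun i _ => ?_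
    refine psf_dvd_coeff_mul (fun k' => ?_) k
    rw [map_sub]
    have h3 := psf_phi_expand_congr φ hC hX (t i) k'
    rw [← dvd_neg] at h3
    rw [show coeff k' (psfExpand (t i)) - coeff k' (φ (t i))
      = -(coeff k' (φ (t i)) - coeff k' (psfExpand (t i))) by ring]
    exact h3
  have hdvd : C ((p:ℤ_[p])^1) ∣ (f - ∑ i : Fin p, φ (t i) * (1+X:A)^(i:ℕ)) :=
    psf_C_pow_dvd_iff.mpr (fun k => by rw [pow_one]; exact hres k)
  obtain ⟨f', hf'⟩ := hdvd
  rw [pow_one] at hf'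
  exact ⟨t, f', by rw [← hf']; ring⟩

lemma psf_phi_coeff_dvd (φ : A →+* A) (hC : ∀ c : ℤ_[p], φ (C c) = C c)
    (hX : φ X = (1+X)^p - 1) (d : A) (c : ℤ_[p]) (h : ∀ k', c ∣ coeff k' d) (k : ℕ) :
    c ∣ coeff k (φ d) := by
  rw [psf_phi_coeff_one φ hC hX]
  exact Finset.dvd_sum fun n _ => (h n).mul_right _

lemma psf_surj (φ : A →+* A) (hC : ∀ c : ℤ_[p], φ (C c) = C c)
    (hX : φ X = (1+X)^p - 1) (f : A) :
    ∃ h : Fin p → A, f = ∑ i : Fin p, φ (h i) * (1+X:A)^(i:ℕ) := by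
  choose T F hTF using fun f' => psf_step φ hC hX f'
  set seq : ℕ → A := fun n => F^[n] f with hseqdef
  have hseq : ∀ n, seq (n+1) = F (seq n) := fun n => Function.iterate_succ_apply' F n f
  set P : Fin p → ℕ → A := fun i N => ∑ n ∈ range N, C ((p:ℤ_[p])^n) * T (seq n) i
    with hPdef
  have hmain : ∀ N, f = (∑ i : Fin p, φ (P i N) * (1+X:A)^(i:ℕ))
      + C ((p:ℤ_[p])^N) * seq N := by
    intro N
    induction N with
    | zero =>
      have h0 : ∀ i : Fin p, P i 0 = 0 := fun i => by rw [hPdef]; simp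
      simp only [h0, map_zero, zero_mul, Finset.sum_const_zero, pow_zero, map_one, one_mul,
        zero_add]
      rfl
    | succ N ihN =>
      have e1 : ∀ i : Fin p, φ (P i (N+1))
          = φ (P i N) + C ((p:ℤ_[p])^N) * φ (T (seq N) i) := by
        intro i
        rw [hPdef]
        simp only [Finset.sum_range_succ, map_add, map_mul, hC]
      have e0 : seq N = (∑ i : Fin p, φ (T (seq N) i) * (1+X:A)^(i:ℕ))
          + C (p:ℤ_[p]) * seq (N+1) := by
        rw [hseq N]
        exact hTF (seq N)
      have E1 : ∑ i : Fin p, φ (P i (N+1)) * (1+X:A)^(i:ℕ)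
          = (∑ i : Fin p, φ (P i N) * (1+X:A)^(i:ℕ))
            + C ((p:ℤ_[p])^N) * ∑ i : Fin p, φ (T (seq N) i) * (1+X:A)^(i:ℕ) := by
        rw [Finset.mul_sum, ← Finset.sum_add_distrib]
        exact Finset.sum_congr rfl fun i _ => by rw [e1 i]; ring
      have e3 : C ((p:ℤ_[p])^N) * C (p:ℤ_[p]) = C ((p:ℤ_[p])^(N+1)) := by
        rw [← map_mul, ← pow_succ]
      linear_combination ihN + C ((p:ℤ_[p])^N) * e0 - E1 + seq (N+1) * e3
  have hsummable0 : ∀ (c : ℕ → ℤ_[p]), Summable (fun n => (p:ℤ_[p])^n * c n) := by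
    intro c
    refine Summable.of_norm_bounded (g := fun n => ((p:ℝ)⁻¹)^n)
      (summable_geometric_of_lt_one (by positivity)
        (by rw [inv_lt_one_iff₀]; right; exact_mod_cast hp.out.one_lt)) (fun n => ?_)
    calc ‖(p:ℤ_[p])^n * c n‖
        ≤ ‖(p:ℤ_[p])^n‖ * ‖c n‖ := norm_mul_le _ _
      _ ≤ ‖(p:ℤ_[p])^n‖ * 1 := by
          exact mul_le_mul_of_nonneg_left (PadicInt.norm_le_one _) (norm_nonneg _)
      _ = ((p:ℝ)⁻¹)^n := by
          rw [mul_one, PadicInt.norm_p_pow, zpow_neg, zpow_natCast, inv_pow]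
  have hsummable : ∀ (i : Fin p) (k : ℕ),
      Summable (fun n => (p:ℤ_[p])^n * coeff k (T (seq n) i)) := fun i k => hsummable0 _
  set h : Fin p → A := fun i =>
    PowerSeries.mk fun k => ∑' n, (p:ℤ_[p])^n * coeff k (T (seq n) i) with hhdef
  have htail : ∀ (i : Fin p) (k N : ℕ),
      (p:ℤ_[p])^N ∣ coeff k (h i) - coeff k (P i N) := by
    intro i k N
    have hsplit := Summable.sum_add_tsum_nat_add N (hsummable i k)
    have hPk : coeff k (P i N)
        = ∑ n ∈ range N, (p:ℤ_[p])^n * coeff k (T (seq n) i) := by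
      rw [hPdef]
      simp only [map_sum, coeff_C_mul]
    have hhk : coeff k (h i)
        = ∑' n, (p:ℤ_[p])^n * coeff k (T (seq n) i) := by
      rw [hhdef]
      simp only [coeff_mk]
    rw [hhk, hPk, ← hsplit, add_sub_cancel_left]
    have : ∀ m : ℕ, (p:ℤ_[p])^(m+N) * coeff k (T (seq (m+N)) i)
        = (p:ℤ_[p])^N * ((p:ℤ_[p])^m * coeff k (T (seq (m+N)) i)) := by
      intro m
      rw [pow_add]
      ring
    rw [tsum_congr this, Summable.tsum_mul_left]
    · exact Dvd.intro _ rfl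
    · exact hsummable0 _
  refine ⟨h, ?_⟩
  have hzero : ∀ k, coeff k (f - ∑ i : Fin p, φ (h i) * (1+X:A)^(i:ℕ)) = 0 := by
    intro k
    refine psf_padic_zero _ (fun N => ?_)
    have hsplit2 : f - ∑ i : Fin p, φ (h i) * (1+X:A)^(i:ℕ)
        = C ((p:ℤ_[p])^N) * seq N
          + ∑ i : Fin p, (φ (P i N) - φ (h i)) * (1+X:A)^(i:ℕ) := by
      rw [hmain N, Finset.sum_congr rfl (fun (i : Fin p) _ => (sub_mul (φ (P i N)) (φ (h i))
        ((1+X:A)^(i:ℕ)))), Finset.sum_sub_distrib]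
      ring
    rw [hsplit2, map_add, map_sum, coeff_C_mul]
    refine dvd_add (Dvd.intro _ rfl) (Finset.dvd_sum fun i _ => ?_)
    refine psf_dvd_coeff_mul (fun k' => ?_) k
    rw [← map_sub]
    refine psf_phi_coeff_dvd φ hC hX _ _ (fun k'' => ?_) k'
    rw [map_sub]
    have h5 := htail i k'' N
    rw [← dvd_neg] at h5
    rw [show coeff k'' (P i N) - coeff k'' (h i)
      = -(coeff k'' (h i) - coeff k'' (P i N)) by ring]
    exact h5
  have : f - ∑ i : Fin p, φ (h i) * (1+X:A)^(i:ℕ) = 0 := by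
    ext k
    rw [map_zero]
    exact hzero k
  rw [sub_eq_zero] at this
  exact this

end PsfAux

/-- Let `A = ℤ_p[[X]]` and let `φ` be the continuous `ℤ_p`-algebra
endomorphism of `A` determined by `φ(X) = (1+X)^p − 1` (continuity is with respect to
the `(p, X)`-adic topology).  Then `A` is a free module of rank `p` over the subring
`φ(A)`, with basis `(1+X)^i` for `0 ≤ i ≤ p−1`. -/
theorem powerSeries_free_over_frobenius (p : ℕ) [Fact p.Prime]
    (φ : PowerSeries ℤ_[p] →+* PowerSeries ℤ_[p])
    (hC : ∀ c : ℤ_[p], φ (PowerSeries.C c) = PowerSeries.C c)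
    (hX : φ PowerSeries.X = (1 + PowerSeries.X) ^ p - 1)
    (hcont : @Continuous _ _
      ((Ideal.span {(p : PowerSeries ℤ_[p]), PowerSeries.X}).adicTopology)
      ((Ideal.span {(p : PowerSeries ℤ_[p]), PowerSeries.X}).adicTopology) φ) :
    letI : Algebra φ.range (PowerSeries ℤ_[p]) := φ.range.subtype.toAlgebra
    ∃ b : Module.Basis (Fin p) φ.range (PowerSeries ℤ_[p]),
      ∀ i : Fin p, b i = (1 + PowerSeries.X) ^ (i : ℕ) := by
  letI : Algebra φ.range (PowerSeries ℤ_[p]) := φ.range.subtype.toAlgebra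
  have hli : LinearIndependent φ.range
      (fun i : Fin p => (1 + PowerSeries.X : PowerSeries ℤ_[p]) ^ (i:ℕ)) := by
    rw [Fintype.linearIndependent_iff]
    intro c hc i
    choose a ha using fun j : Fin p => RingHom.mem_range.mp (c j).2
    have hc' : ∑ j : Fin p, φ (a j) * (1 + PowerSeries.X : PowerSeries ℤ_[p])^(j:ℕ) = 0 := by
      rw [← hc]
      exact Finset.sum_congr rfl fun j _ => by rw [ha j, Algebra.smul_def]; rfl
    have hz := psf_inj φ hC hX a hc' i
    apply Subtype.ext
    rw [← ha i, hz, map_zero]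
    rfl
  have hsp : (⊤ : Submodule φ.range (PowerSeries ℤ_[p])) ≤ Submodule.span φ.range
      (Set.range fun i : Fin p => (1 + PowerSeries.X : PowerSeries ℤ_[p]) ^ (i:ℕ)) := by
    intro f _
    obtain ⟨h, hf⟩ := psf_surj φ hC hX f
    rw [hf]
    refine Submodule.sum_mem _ fun i _ => ?_
    have heq : φ (h i) * (1 + PowerSeries.X : PowerSeries ℤ_[p])^(i:ℕ)
        = (⟨φ (h i), ⟨h i, rfl⟩⟩ : φ.range) • (1 + PowerSeries.X : PowerSeries ℤ_[p])^(i:ℕ) := by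
      rw [Algebra.smul_def]
      rfl
    rw [heq]
    exact Submodule.smul_mem _ _ (Submodule.subset_span ⟨i, rfl⟩)
  exact ⟨Module.Basis.mk hli hsp, fun i => Module.Basis.mk_apply hli hsp i⟩
end
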